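/- Let d ≥ 2 and let b : ℝ^d → ℝ be measurable and M ≥ 0 a constant such that λ^d |B ∩ {x : |b(x)| > λ}| ≤ M for every ball B of radius 1 and every λ > 0, where |·| denotes Lebesgue measure. Then for every r ∈ (1, d) there is a constant N depending only on d and r such that for every ball B of radius ρ ∈ (0,1]: ρ^r ⨍_{B} |b(x)|^r dx ≤ N M^{r/d}. -/

import Mathlib

open MeasureTheory Metric Set

private lemma stmt17_aux_alg (D r V M P C R : ℝ) (hV : V ≠ 0) (hM : M ≠ 0)
    (hr : r ≠ 0) (hdr : D - r ≠ 0) (hR : R ≠ 0) (hC : C ≠ 0) :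
    R * (V⁻¹ * (r * (V * ((P / (R * C)) / r)
      + M * ((P / (R * C)) * (V / M) / (D - r)))))
      = (1 + r / (D - r)) * C⁻¹ * P := by
  field_simp

/-- if `λ^d |B ∩ {|b| > λ}| ≤ M` for every ball `B` of radius 1 and every
`λ > 0`, then for every `r ∈ (1, d)` there is `N = N(d, r)` such that for every ball of
radius `ρ ∈ (0,1]`: `ρ^r ⨍_B |b|^r ≤ N M^{r/d}`. -/
theorem stmt17 (d : ℕ) (hd : 2 ≤ d) (b : EuclideanSpace ℝ (Fin d) → ℝ)
    (hb : Measurable b) (M : ℝ) (hM : 0 ≤ M)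
    (h : ∀ (x : EuclideanSpace ℝ (Fin d)) (lam : ℝ), 0 < lam →
      lam ^ (d : ℝ) * (volume (ball x 1 ∩ {y | lam < |b y|})).toReal ≤ M)
    (r : ℝ) (hr1 : 1 < r) (hr2 : r < d) :
    ∃ N : ℝ, ∀ (x : EuclideanSpace ℝ (Fin d)) (ρ : ℝ), 0 < ρ → ρ ≤ 1 →
      ρ ^ r * ⨍ y in ball x ρ, |b y| ^ r ≤ N * M ^ (r / (d : ℝ)) := by
  haveI : Nonempty (Fin d) := ⟨⟨0, by omega⟩⟩
  have hd0 : (0 : ℝ) < d := by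
    have : (2 : ℝ) ≤ d := by exact_mod_cast hd
    linarith
  have hdr : 0 < (d : ℝ) - r := by linarith
  set c : ℝ := (volume (ball (0 : EuclideanSpace ℝ (Fin d)) 1)).toReal with hc
  have hc_pos : 0 < c :=
    ENNReal.toReal_pos (measure_ball_pos volume 0 one_pos).ne' measure_ball_lt_top.ne
  refine ⟨(1 + r / ((d : ℝ) - r)) * c ^ (-(r / (d : ℝ))), ?_⟩
  intro x ρ hρ hρ1
  set V : ℝ := (volume (ball x ρ)).toReal with hV
  have hVball : volume (ball x ρ)
      = ENNReal.ofReal (ρ ^ d) * volume (ball (0 : EuclideanSpace ℝ (Fin d)) 1) := by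
    have h1 := Measure.addHaar_ball (volume : Measure (EuclideanSpace ℝ (Fin d))) x hρ.le
    rwa [finrank_euclideanSpace_fin] at h1
  have hV_pos : 0 < V :=
    ENNReal.toReal_pos (measure_ball_pos volume x hρ).ne' measure_ball_lt_top.ne
  have hVeq : V = ρ ^ d * c := by
    rw [hV, hVball, ENNReal.toReal_mul, ENNReal.toReal_ofReal (by positivity)]
  have hball_sub : ball x ρ ⊆ ball x 1 := ball_subset_ball hρ1
  have hb1_lt_top : volume (ball x 1) < ⊤ := measure_ball_lt_top
  -- measurability facts
  have hmeas : ∀ t : ℝ, MeasurableSet {y | t < |b y|} := fun t =>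
    measurableSet_lt measurable_const hb.abs
  set μ : Measure (EuclideanSpace ℝ (Fin d)) := volume.restrict (ball x ρ) with hμ
  have hf_nn : 0 ≤ᵐ[μ] fun y => |b y| := Filter.Eventually.of_forall fun y => abs_nonneg _
  have hf_m : AEMeasurable (fun y => |b y|) μ := hb.abs.aemeasurable
  -- key pointwise measure estimate
  have hsmall : ∀ t : ℝ, 0 < t →
      volume (ball x 1 ∩ {y | t < |b y|}) ≤ ENNReal.ofReal (M * t ^ (-(d : ℝ))) := by
    intro t ht
    have hne : volume (ball x 1 ∩ {y | t < |b y|}) ≠ ⊤ :=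
      ((measure_mono inter_subset_left).trans_lt hb1_lt_top).ne
    have htd : 0 < t ^ (d : ℝ) := Real.rpow_pos_of_pos ht _
    have h1 := h x t ht
    have h2 : (volume (ball x 1 ∩ {y | t < |b y|})).toReal ≤ M * t ^ (-(d : ℝ)) := by
      rw [Real.rpow_neg ht.le]
      rw [mul_comm] at h1
      calc (volume (ball x 1 ∩ {y | t < |b y|})).toReal
          ≤ M / t ^ (d : ℝ) := (le_div_iff₀ htd).2 h1
        _ = M * (t ^ (d : ℝ))⁻¹ := by ring
    calc volume (ball x 1 ∩ {y | t < |b y|})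
        = ENNReal.ofReal ((volume (ball x 1 ∩ {y | t < |b y|})).toReal) :=
          (ENNReal.ofReal_toReal hne).symm
      _ ≤ ENNReal.ofReal (M * t ^ (-(d : ℝ))) := ENNReal.ofReal_le_ofReal h2
  have hμt : ∀ t : ℝ, μ {a | t < |b a|} ≤ volume (ball x 1 ∩ {y | t < |b y|}) := by
    intro t
    rw [hμ, Measure.restrict_apply (hmeas t)]
    exact measure_mono fun y hy => ⟨hball_sub hy.2, hy.1⟩
  rcases eq_or_lt_of_le hM with hM0 | hMpos
  · -- M = 0 : b vanishes a.e.
    have hbz : volume ({y | b y ≠ 0} ∩ ball x 1) = 0 := by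
      have hsub : {y | b y ≠ 0} ∩ ball x 1 ⊆
          ⋃ n : ℕ, (ball x 1 ∩ {y | (1 : ℝ) / (n + 1) < |b y|}) := by
        rintro y ⟨hy1, hy2⟩
        have hby : 0 < |b y| := abs_pos.2 hy1
        obtain ⟨n, hn⟩ := exists_nat_gt (1 / |b y|)
        refine mem_iUnion.2 ⟨n, hy2, ?_⟩
        have hn1 : 1 / |b y| < n + 1 := by linarith
        have h5 := (div_lt_iff₀ hby).1 hn1
        simp only [mem_setOf_eq]
        rw [div_lt_iff₀ (by positivity : (0:ℝ) < (n:ℝ) + 1)]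
        nlinarith
      refine measure_mono_null hsub (measure_iUnion_null fun n => ?_)
      have hpos : (0 : ℝ) < 1 / (n + 1) := by positivity
      have h1 := h x (1 / (n + 1)) hpos
      rw [← hM0] at h1
      have hnt : volume (ball x 1 ∩ {y | (1 : ℝ) / (n + 1) < |b y|}) ≠ ⊤ :=
        ((measure_mono inter_subset_left).trans_lt hb1_lt_top).ne
      have htd : 0 < (1 / ((n : ℝ) + 1)) ^ (d : ℝ) := Real.rpow_pos_of_pos hpos _
      have h2 : (volume (ball x 1 ∩ {y | (1 : ℝ) / (n + 1) < |b y|})).toReal = 0 := by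
        nlinarith [ENNReal.toReal_nonneg
          (a := volume (ball x 1 ∩ {y | (1 : ℝ) / (n + 1) < |b y|}))]
      rcases (ENNReal.toReal_eq_zero_iff _).1 h2 with h3 | h3
      · exact h3
      · exact absurd h3 hnt
    have hae : (fun y => |b y| ^ r) =ᵐ[μ] fun _ => (0 : ℝ) := by
      rw [hμ, Filter.EventuallyEq, ae_restrict_iff' measurableSet_ball]
      have : volume {y | ¬(y ∈ ball x ρ → |b y| ^ r = 0)} = 0 := by
        refine measure_mono_null (fun y hy => ?_) hbz
        simp only [not_forall, mem_setOf_eq] at hy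
        obtain ⟨hy1, hy2⟩ := hy
        refine ⟨fun hy3 => hy2 ?_, hball_sub hy1⟩
        rw [hy3, abs_zero, Real.zero_rpow (by linarith)]
      exact this
    have : ⨍ y in ball x ρ, |b y| ^ r = 0 := by
      rw [setAverage_eq, integral_congr_ae hae, integral_zero, smul_zero]
    rw [this, ← hM0, mul_zero, Real.zero_rpow (by positivity), mul_zero]
  · -- M > 0 : layer cake argument
    set T : ℝ := (M / V) ^ ((1 : ℝ) / d) with hT
    have hMV : 0 < M / V := div_pos hMpos hV_pos
    have hT_pos : 0 < T := Real.rpow_pos_of_pos hMV _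
    -- layer cake
    have key := lintegral_rpow_eq_lintegral_meas_lt_mul μ hf_nn hf_m (by linarith : (0 : ℝ) < r)
    -- split the t-integral
    have hsplit : ∫⁻ t in Ioi (0 : ℝ), μ {a | t < |b a|} * ENNReal.ofReal (t ^ (r - 1))
        = (∫⁻ t in Ioc (0 : ℝ) T, μ {a | t < |b a|} * ENNReal.ofReal (t ^ (r - 1)))
          + ∫⁻ t in Ioi T, μ {a | t < |b a|} * ENNReal.ofReal (t ^ (r - 1)) := by
      rw [← Ioc_union_Ioi_eq_Ioi hT_pos.le,
        lintegral_union measurableSet_Ioi (Ioc_disjoint_Ioi le_rfl)]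
    -- first piece
    have hA : (∫⁻ t in Ioc (0 : ℝ) T, μ {a | t < |b a|} * ENNReal.ofReal (t ^ (r - 1)))
        ≤ ENNReal.ofReal (V * (T ^ r / r)) := by
      have step1 : (∫⁻ t in Ioc (0 : ℝ) T, μ {a | t < |b a|} * ENNReal.ofReal (t ^ (r - 1)))
          ≤ ∫⁻ t in Ioc (0 : ℝ) T, volume (ball x ρ) * ENNReal.ofReal (t ^ (r - 1)) := by
        refine lintegral_mono fun t => mul_le_mul_left ?_ _
        calc μ {a | t < |b a|} ≤ μ univ := measure_mono (subset_univ _)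
          _ = volume (ball x ρ) := by rw [hμ, Measure.restrict_apply_univ]
      have step2 : (∫⁻ t in Ioc (0 : ℝ) T, volume (ball x ρ) * ENNReal.ofReal (t ^ (r - 1)))
          = volume (ball x ρ) * ∫⁻ t in Ioc (0 : ℝ) T, ENNReal.ofReal (t ^ (r - 1)) :=
        lintegral_const_mul _ (by fun_prop)
      have hint : IntegrableOn (fun t : ℝ => t ^ (r - 1)) (Ioc 0 T) := by
        rw [← intervalIntegrable_iff_integrableOn_Ioc_of_le hT_pos.le]
        exact intervalIntegral.intervalIntegrable_rpow' (by linarith)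
      have step3 : (∫⁻ t in Ioc (0 : ℝ) T, ENNReal.ofReal (t ^ (r - 1)))
          = ENNReal.ofReal (T ^ r / r) := by
        rw [← ofReal_integral_eq_lintegral_ofReal hint ?nn]
        case nn =>
          filter_upwards [self_mem_ae_restrict measurableSet_Ioc] with t ht
          exact Real.rpow_nonneg ht.1.le _
        congr 1
        rw [← intervalIntegral.integral_of_le hT_pos.le, integral_rpow (Or.inl (by linarith))]
        rw [sub_add_cancel, Real.zero_rpow (by linarith : r ≠ 0)]
        ring
      calc (∫⁻ t in Ioc (0 : ℝ) T, μ {a | t < |b a|} * ENNReal.ofReal (t ^ (r - 1)))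
          ≤ volume (ball x ρ) * ENNReal.ofReal (T ^ r / r) := by
            rw [← step3, ← step2]; exact step1
        _ = ENNReal.ofReal V * ENNReal.ofReal (T ^ r / r) := by
            rw [hV, ENNReal.ofReal_toReal measure_ball_lt_top.ne]
        _ = ENNReal.ofReal (V * (T ^ r / r)) := (ENNReal.ofReal_mul hV_pos.le).symm
    -- second piece
    have hB : (∫⁻ t in Ioi T, μ {a | t < |b a|} * ENNReal.ofReal (t ^ (r - 1)))
        ≤ ENNReal.ofReal (M * (T ^ (r - d) / ((d : ℝ) - r))) := by
      have step1 : (∫⁻ t in Ioi T, μ {a | t < |b a|} * ENNReal.ofReal (t ^ (r - 1)))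
          ≤ ∫⁻ t in Ioi T, ENNReal.ofReal (M * t ^ (r - 1 - d)) := by
        refine setLIntegral_mono' measurableSet_Ioi fun t ht => ?_
        have ht0 : (0 : ℝ) < t := hT_pos.trans ht
        calc μ {a | t < |b a|} * ENNReal.ofReal (t ^ (r - 1))
            ≤ ENNReal.ofReal (M * t ^ (-(d : ℝ))) * ENNReal.ofReal (t ^ (r - 1)) := by
              gcongr
              exact (hμt t).trans (hsmall t ht0)
          _ = ENNReal.ofReal (M * t ^ (-(d : ℝ)) * t ^ (r - 1)) :=
              (ENNReal.ofReal_mul (by positivity)).symm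
          _ = ENNReal.ofReal (M * t ^ (r - 1 - d)) := by
              rw [mul_assoc, ← Real.rpow_add ht0]
              ring_nf
      have hint2 : IntegrableOn (fun t : ℝ => M * t ^ (r - 1 - d)) (Ioi T) :=
        (integrableOn_Ioi_rpow_of_lt (by linarith) hT_pos).const_mul M
      have step2 : (∫⁻ t in Ioi T, ENNReal.ofReal (M * t ^ (r - 1 - d)))
          = ENNReal.ofReal (M * (T ^ (r - d) / ((d : ℝ) - r))) := by
        rw [← ofReal_integral_eq_lintegral_ofReal hint2 ?nn]
        case nn =>
          filter_upwards [self_mem_ae_restrict measurableSet_Ioi] with t ht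
          have : (0 : ℝ) < t := hT_pos.trans ht
          positivity
        congr 1
        rw [MeasureTheory.integral_const_mul, integral_Ioi_rpow_of_lt (by linarith) hT_pos]
        rw [show r - 1 - (d : ℝ) + 1 = r - d by ring]
        have hne1 : r - (d : ℝ) ≠ 0 := by linarith
        have hne2 : (d : ℝ) - r ≠ 0 := by linarith
        generalize T ^ (r - (d : ℝ)) = A
        field_simp
        ring
      exact step1.trans_eq step2
    -- total bound on the lintegral
    set K : ℝ := r * (V * (T ^ r / r) + M * (T ^ (r - d) / ((d : ℝ) - r))) with hKdef
    have hK_nn : 0 ≤ K := by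
      have h1 : 0 ≤ T ^ r := Real.rpow_nonneg hT_pos.le _
      have h2 : 0 ≤ T ^ (r - d) := Real.rpow_nonneg hT_pos.le _
      have h3 : 0 ≤ V * (T ^ r / r) := by positivity
      have h4 : 0 ≤ M * (T ^ (r - d) / ((d : ℝ) - r)) := by positivity
      positivity
    have htotal : (∫⁻ y, ENNReal.ofReal (|b y| ^ r) ∂μ) ≤ ENNReal.ofReal K := by
      rw [key, hsplit]
      calc ENNReal.ofReal r * ((∫⁻ t in Ioc (0 : ℝ) T, μ {a | t < |b a|}
              * ENNReal.ofReal (t ^ (r - 1)))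
            + ∫⁻ t in Ioi T, μ {a | t < |b a|} * ENNReal.ofReal (t ^ (r - 1)))
          ≤ ENNReal.ofReal r * (ENNReal.ofReal (V * (T ^ r / r))
              + ENNReal.ofReal (M * (T ^ (r - d) / ((d : ℝ) - r)))) := by
            gcongr
        _ = ENNReal.ofReal K := by
            rw [← ENNReal.ofReal_add, ← ENNReal.ofReal_mul (by linarith : (0:ℝ) ≤ r)]
            · have h1 : 0 ≤ T ^ r := Real.rpow_nonneg hT_pos.le _
              positivity
            · have h2 : 0 ≤ T ^ (r - d) := Real.rpow_nonneg hT_pos.le _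
              positivity
    -- Bochner integral bound
    have hI : (∫ y in ball x ρ, |b y| ^ r) ≤ K := by
      have hmb : AEStronglyMeasurable (fun y => |b y| ^ r) μ := by
        apply Measurable.aestronglyMeasurable
        fun_prop
      rw [show (volume.restrict (ball x ρ)) = μ from rfl,
        integral_eq_lintegral_of_nonneg_ae
          (Filter.Eventually.of_forall fun y => Real.rpow_nonneg (abs_nonneg _) _) hmb]
      exact ENNReal.toReal_le_of_le_ofReal hK_nn htotal
    -- final algebra
    have hTr : T ^ r = (M / V) ^ (r / (d : ℝ)) := by
      rw [hT, ← Real.rpow_mul hMV.le]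
      congr 1
      field_simp
    have hTrd : T ^ (r - (d : ℝ)) = (M / V) ^ (r / (d : ℝ)) * (V / M) := by
      rw [hT, ← Real.rpow_mul hMV.le]
      have he : (1 / (d : ℝ)) * (r - d) = r / d - 1 := by field_simp
      rw [he, Real.rpow_sub hMV, Real.rpow_one, div_div_eq_mul_div, mul_div_assoc]
    have hVr : V ^ (r / (d : ℝ)) = ρ ^ r * c ^ (r / (d : ℝ)) := by
      rw [hVeq, Real.mul_rpow (by positivity) hc_pos.le, ← Real.rpow_natCast ρ d,
        ← Real.rpow_mul hρ.le]
      congr 2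
      field_simp
    have hMVr : (M / V) ^ (r / (d : ℝ)) = M ^ (r / (d : ℝ)) / (ρ ^ r * c ^ (r / (d : ℝ))) := by
      rw [Real.div_rpow hMpos.le hV_pos.le, hVr]
    have hcneg : c ^ (-(r / (d : ℝ))) = (c ^ (r / (d : ℝ)))⁻¹ := by
      rw [Real.rpow_neg hc_pos.le]
    have hR : (0 : ℝ) < ρ ^ r := Real.rpow_pos_of_pos hρ r
    have hC : (0 : ℝ) < c ^ (r / (d : ℝ)) := Real.rpow_pos_of_pos hc_pos _
    have hMs : (0 : ℝ) < M ^ (r / (d : ℝ)) := Real.rpow_pos_of_pos hMpos _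
    clear_value T K
    rw [setAverage_eq, smul_eq_mul, measureReal_def, ← hV]
    clear_value V c
    have hstep : ρ ^ r * (V⁻¹ * ∫ y in ball x ρ, |b y| ^ r) ≤ ρ ^ r * (V⁻¹ * K) := by
      gcongr
    refine hstep.trans (le_of_eq ?_)
    rw [hKdef, hTr, hTrd, hMVr, hcneg]
    exact stmt17_aux_alg (d : ℝ) r V M _ _ _ (ne_of_gt hV_pos) (ne_of_gt hMpos)
      (by linarith) (ne_of_gt hdr) (ne_of_gt hR) (ne_of_gt hC)
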